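/- Let n ≡ 0 (mod 4). The polynomials Φ_n^1(x) and Φ_n^3(x) are irreducible over ℚ(i). -/

import Mathlib

set_option synthInstance.maxHeartbeats 1000000
set_option maxHeartbeats 2000000

open Finset Polynomial

/-- `G_n^r(1) = {a : 1 ≤ a ≤ n-1, gcd(a,n)=1, a ≡ r (mod 4)}`. -/
def Grone (n r : ℕ) : Finset ℕ :=
  (Finset.range n).filter (fun a => 1 ≤ a ∧ Nat.gcd a n = 1 ∧ a % 4 = r)

/-- `Φ_n^r(x) = ∏_{a ∈ G_n^r(1)} (x − e^{2πia/n})`. -/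
noncomputable def Phir (n r : ℕ) : Polynomial ℂ :=
  ∏ a ∈ Grone n r, (X - C (Complex.exp (2 * Real.pi * Complex.I * a / n)))

/-- The field `ℚ(i)`, realized as an intermediate field of `ℂ/ℚ`. -/
noncomputable def QI : IntermediateField ℚ ℂ := IntermediateField.adjoin ℚ {Complex.I}

section aux
open IntermediateField Complex

variable {n : ℕ}

lemma grone_card_add (hn : 4 ≤ n) (h4 : n % 4 = 0) :
    (Grone n 1).card + (Grone n 3).card = n.totient := by
  have hdisj : Disjoint (Grone n 1) (Grone n 3) := by
    simp only [Finset.disjoint_left, Grone, Finset.mem_filter]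
    rintro a ⟨-, -, -, h1⟩ ⟨-, -, -, h3⟩; omega
  rw [Nat.totient, ← Finset.card_union_of_disjoint hdisj]
  congr 1
  ext a
  simp only [Grone, Finset.mem_union, Finset.mem_filter, Finset.mem_range]
  constructor
  · rintro (⟨h, h1, h2, h3⟩ | ⟨h, h1, h2, h3⟩) <;>
      exact ⟨h, Nat.coprime_comm.mp h2⟩
  · rintro ⟨h, hc⟩
    have hc' : Nat.gcd a n = 1 := Nat.coprime_comm.mp hc
    have ha1 : 1 ≤ a := by
      rcases Nat.eq_zero_or_pos a with rfl | hp
      · rw [Nat.gcd_zero_left] at hc'; omega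
      · exact hp
    have hodd : ¬ (2 ∣ a) := by
      intro h2
      have : 2 ∣ Nat.gcd a n := Nat.dvd_gcd h2 (by omega)
      omega
    have h2 : a % 2 = 1 := by omega
    have : a % 4 = 1 ∨ a % 4 = 3 := by omega
    rcases this with h' | h'
    · exact Or.inl ⟨h, ha1, hc', h'⟩
    · exact Or.inr ⟨h, ha1, hc', h'⟩

noncomputable def zeta (n : ℕ) : ℂ := Complex.exp (2 * Real.pi * Complex.I / n)

lemma zeta_prim (hn : 0 < n) : IsPrimitiveRoot (zeta n) n :=
  Complex.isPrimitiveRoot_exp n hn.ne'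

lemma exp_eq_zeta_pow (a : ℕ) :
    Complex.exp (2 * Real.pi * Complex.I * a / n) = zeta n ^ a := by
  rw [zeta, ← Complex.exp_nat_mul]
  ring_nf

lemma zeta_pow_mod (hn : 0 < n) (a : ℕ) : zeta n ^ (a % n) = zeta n ^ a := by
  conv_rhs => rw [← Nat.mod_add_div a n, pow_add, pow_mul, (zeta_prim hn).pow_eq_one, one_pow,
    mul_one]

lemma zeta_pow_quarter (hn : 0 < n) (h4 : n % 4 = 0) : zeta n ^ (n / 4) = Complex.I := by
  rw [zeta, ← Complex.exp_nat_mul]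
  have h1 : ((n / 4 : ℕ) : ℂ) = (n : ℂ) / 4 := by
    rw [Nat.cast_div (by omega : 4 ∣ n) (by norm_num)]; norm_num
  have h2 : (n : ℂ) ≠ 0 := by exact_mod_cast hn.ne'
  have h3 : ((n / 4 : ℕ) : ℂ) * (2 * Real.pi * Complex.I / n) = (Real.pi / 2 : ℝ) * Complex.I := by
    rw [h1]; push_cast; field_simp; ring
  rw [h3, Complex.exp_mul_I, ← Complex.ofReal_cos, ← Complex.ofReal_sin,
    Real.cos_pi_div_two, Real.sin_pi_div_two]
  simp

lemma prim_I (hn : 0 < n) (h4 : n % 4 = 0) : IsPrimitiveRoot Complex.I 4 := by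
  rw [← zeta_pow_quarter hn h4]
  exact (zeta_prim hn).pow hn (by omega)

lemma QI_le (hn : 0 < n) (h4 : n % 4 = 0) : QI ≤ ℚ⟮zeta n⟯ := by
  rw [show QI = IntermediateField.adjoin ℚ {Complex.I} from rfl, adjoin_le_iff,
    Set.singleton_subset_iff, ← zeta_pow_quarter hn h4]
  exact pow_mem (mem_adjoin_simple_self ℚ (zeta n)) _

lemma finrank_QI (hn : 0 < n) (h4 : n % 4 = 0) : Module.finrank ℚ QI = 2 := by
  have hI : IsIntegral ℚ Complex.I :=
    ((prim_I hn h4).isIntegral (by norm_num)).tower_top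
  have h : QI = ℚ⟮Complex.I⟯ := rfl
  rw [h, IntermediateField.adjoin.finrank hI,
    ← Polynomial.cyclotomic_eq_minpoly_rat (prim_I hn h4) (by norm_num),
    Polynomial.natDegree_cyclotomic]
  decide

lemma finrank_L (hn : 0 < n) : Module.finrank ℚ ℚ⟮zeta n⟯ = n.totient := by
  have hI : IsIntegral ℚ (zeta n) := ((zeta_prim hn).isIntegral hn).tower_top
  rw [IntermediateField.adjoin.finrank hI,
    ← Polynomial.cyclotomic_eq_minpoly_rat (zeta_prim hn) hn, Polynomial.natDegree_cyclotomic]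

/-- the conjugation hom fixing `ℚ(i)` -/
lemma fix_QI (hn : 0 < n) (h4 : n % 4 = 0) (d : ℕ) (hd1 : d % 4 = 1) (hdn : Nat.gcd d n = 1) :
    ∃ φ : ℚ⟮zeta n⟯ →ₐ[ℚ] ℂ, φ (AdjoinSimple.gen ℚ (zeta n)) = zeta n ^ d ∧
      ∀ x : QI, φ (IntermediateField.inclusion (QI_le hn h4) x) = (x : ℂ) := by
  have hInt : IsIntegral ℚ (zeta n) := ((zeta_prim hn).isIntegral hn).tower_top
  set B := IntermediateField.adjoin.powerBasis hInt with hB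
  have hgen : B.gen = AdjoinSimple.gen ℚ (zeta n) := IntermediateField.adjoin.powerBasis_gen hInt
  have hmin : minpoly ℚ B.gen = minpoly ℚ (zeta n) := by
    rw [hgen]; exact IntermediateField.minpoly_gen (F := ℚ) (zeta n)
  have hy : (aeval ((zeta n) ^ d)) (minpoly ℚ B.gen) = 0 := by
    rw [hmin, ← Polynomial.cyclotomic_eq_minpoly_rat (zeta_prim hn) hn, Polynomial.aeval_def,
      ← Polynomial.eval_map, Polynomial.map_cyclotomic]
    exact ((zeta_prim hn).pow_of_coprime d hdn).isRoot_cyclotomic hn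
  refine ⟨B.lift (zeta n ^ d) hy, by rw [← hgen]; exact B.lift_gen _ hy, ?_⟩
  -- the lift fixes QI pointwise
  have hIInt : IsIntegral ℚ Complex.I := ((prim_I hn h4).isIntegral (by norm_num)).tower_top
  set φ := B.lift (zeta n ^ d) hy with hφ
  have hφgen : φ (AdjoinSimple.gen ℚ (zeta n)) = zeta n ^ d := by rw [← hgen]; exact B.lift_gen _ hy
  have hIC : φ ⟨Complex.I, QI_le hn h4 (mem_adjoin_simple_self ℚ Complex.I)⟩ = Complex.I := by
    have hIel : (⟨Complex.I, QI_le hn h4 (mem_adjoin_simple_self ℚ Complex.I)⟩ : ℚ⟮zeta n⟯)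
        = (AdjoinSimple.gen ℚ (zeta n)) ^ (n / 4) := by
      apply Subtype.ext
      show Complex.I = (zeta n) ^ (n / 4)
      exact (zeta_pow_quarter hn h4).symm
    rw [hIel, map_pow, hφgen, ← pow_mul]
    obtain ⟨k, hk⟩ : ∃ k, d = 4 * k + 1 := ⟨d / 4, by omega⟩
    have hm : n = 4 * (n / 4) := by omega
    have : d * (n / 4) = k * n + n / 4 := by rw [hk]; nth_rewrite 2 [hm]; ring
    rw [this, pow_add, pow_mul', (zeta_prim hn).pow_eq_one, one_pow, one_mul]
    exact zeta_pow_quarter hn h4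
  -- now extend to all of QI
  have key : φ.comp (IntermediateField.inclusion (QI_le hn h4)) = QI.val := by
    apply PowerBasis.algHom_ext (IntermediateField.adjoin.powerBasis hIInt)
    rw [IntermediateField.adjoin.powerBasis_gen hIInt]
    have h1 : (IntermediateField.inclusion (QI_le hn h4)) (AdjoinSimple.gen ℚ Complex.I)
        = ⟨Complex.I, QI_le hn h4 (mem_adjoin_simple_self ℚ Complex.I)⟩ := rfl
    show φ ((IntermediateField.inclusion (QI_le hn h4)) (AdjoinSimple.gen ℚ Complex.I)) = _
    rw [h1, hIC]
    rfl
  intro x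
  have := congrArg (fun f => (f : _ →ₐ[ℚ] ℂ) x) key
  exact DFunLike.congr_fun key x

lemma minpoly_deg (hn4 : 4 ≤ n) (h4 : n % 4 = 0) (c : ℕ) (hcg : Nat.gcd c n = 1) :
    2 * (minpoly QI ((zeta n) ^ c)).natDegree = n.totient := by
  have hn : 0 < n := by omega
  have hInt : IsIntegral QI ((zeta n) ^ c) :=
    (((zeta_prim hn).pow_of_coprime c hcg).isIntegral hn).tower_top
  have hres : IntermediateField.restrictScalars ℚ (QI⟮(zeta n) ^ c⟯) = ℚ⟮zeta n⟯ := by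
    refine (IntermediateField.restrictScalars_adjoin_eq_sup (F := ℚ) QI {zeta n ^ c}).trans ?_
    apply le_antisymm
    · exact sup_le (QI_le hn h4)
        (adjoin_simple_le_iff.mpr (pow_mem (mem_adjoin_simple_self _ _) _))
    · rw [adjoin_simple_le_iff]
      obtain ⟨c', -, hcc'⟩ := Nat.exists_mul_mod_eq_one_of_coprime hcg (by omega)
      have hz : zeta n = ((zeta n) ^ c) ^ c' := by
        rw [← pow_mul, ← zeta_pow_mod hn (c * c'), hcc', pow_one]
      have hmem' : ((zeta n) ^ c) ^ c' ∈ QI ⊔ ℚ⟮(zeta n) ^ c⟯ :=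
        (le_sup_right : ℚ⟮(zeta n) ^ c⟯ ≤ QI ⊔ ℚ⟮(zeta n) ^ c⟯)
          (pow_mem (mem_adjoin_simple_self ℚ ((zeta n) ^ c)) c')
      rwa [← hz] at hmem'
  have key : Module.finrank ℚ QI * Module.finrank QI (QI⟮(zeta n) ^ c⟯) =
      Module.finrank ℚ ((QI⟮(zeta n) ^ c⟯).restrictScalars ℚ) := by
    rw [Module.finrank_mul_finrank]
    rfl
  rw [← IntermediateField.adjoin.finrank hInt, ← finrank_QI hn h4, key, hres, finrank_L hn]

lemma phir_dvd (hn4 : 4 ≤ n) (h4 : n % 4 = 0) (r c : ℕ) (hc : c ∈ Grone n r) :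
    Phir n r ∣ (minpoly QI ((zeta n) ^ c)).map (algebraMap QI ℂ) := by
  have hn : 0 < n := by omega
  have hcmem := hc
  rw [Grone, Finset.mem_filter, Finset.mem_range] at hcmem
  obtain ⟨hcn, hc1, hcg, hcr⟩ := hcmem
  have hInt : IsIntegral QI ((zeta n) ^ c) :=
    (((zeta_prim hn).pow_of_coprime c hcg).isIntegral hn).tower_top
  set q := (minpoly QI ((zeta n) ^ c)).map (algebraMap QI ℂ) with hqdef
  have hqmonic : q.Monic := (minpoly.monic hInt).map _
  have hqne : q ≠ 0 := hqmonic.ne_zero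
  set incl := IntermediateField.inclusion (QI_le hn h4) with hincl
  have hcomp : (algebraMap ℚ⟮zeta n⟯ ℂ).comp incl.toRingHom = algebraMap QI ℂ := by
    ext x; rfl
  set P := (minpoly QI ((zeta n) ^ c)).map incl.toRingHom with hP
  set z := (AdjoinSimple.gen ℚ (zeta n)) ^ c with hzdef
  have hzval : algebraMap ℚ⟮zeta n⟯ ℂ z = (zeta n) ^ c := rfl
  have hPz : P.eval z = 0 := by
    apply (algebraMap ℚ⟮zeta n⟯ ℂ).injective
    rw [map_zero, ← Polynomial.eval₂_at_apply, ← Polynomial.eval_map, hP,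
      Polynomial.map_map, hcomp, hzval, ← hqdef]
    have := minpoly.aeval QI ((zeta n) ^ c)
    rwa [Polynomial.aeval_def, ← Polynomial.eval_map, ← hqdef] at this
  have hroot : ∀ a ∈ Grone n r, q.eval ((zeta n) ^ a) = 0 := by
    intro a ha
    rw [Grone, Finset.mem_filter, Finset.mem_range] at ha
    obtain ⟨han, ha1, hag, har⟩ := ha
    obtain ⟨c', -, hcc'⟩ := Nat.exists_mul_mod_eq_one_of_coprime hcg (by omega)
    obtain ⟨k, hk⟩ : ∃ k, c * c' = n * k + 1 := by
      refine ⟨c * c' / n, ?_⟩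
      conv_lhs => rw [← Nat.div_add_mod (c * c') n]
      rw [hcc']
    set d := a * c' with hd
    have hd4 : d % 4 = 1 := by
      have h44 : (c * c') % 4 = 1 := by
        have hmod : c * c' ≡ 1 [MOD n] := by
          show c * c' % n = 1 % n
          rw [hcc', Nat.one_mod_eq_one.mpr (by omega)]
        have := Nat.ModEq.of_dvd (by omega : (4:ℕ) ∣ n) hmod
        simpa [Nat.ModEq] using this
      have : d % 4 = (a % 4 * (c' % 4)) % 4 := by rw [hd, Nat.mul_mod]
      rw [this, har, ← hcr, ← Nat.mul_mod, h44]
    have hc'g : Nat.gcd c' n = 1 := by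
      have h1 : Nat.gcd c' n ∣ c * c' := Dvd.dvd.mul_left (Nat.gcd_dvd_left c' n) c
      have h2 : Nat.gcd c' n ∣ n * k := Dvd.dvd.mul_right (Nat.gcd_dvd_right c' n) k
      have h3 : Nat.gcd c' n ∣ 1 := by
        have := Nat.dvd_sub h1 h2
        rwa [show c * c' - n * k = 1 by omega] at this
      exact Nat.dvd_one.mp h3
    have hdg : Nat.gcd d n = 1 := Nat.Coprime.mul hag hc'g
    obtain ⟨φ, hφgen, hφfix⟩ := fix_QI hn h4 d hd4 hdg
    have hφz : φ z = (zeta n) ^ a := by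
      rw [hzdef, map_pow, hφgen, ← pow_mul]
      have hh : d * c = (a * k) * n + a := by rw [hd]; nlinarith [hk]
      rw [hh, pow_add, pow_mul', (zeta_prim hn).pow_eq_one, one_pow, one_mul]
    have hφcomp : (φ.toRingHom).comp incl.toRingHom = algebraMap QI ℂ := by
      ext x
      exact hφfix x
    calc q.eval ((zeta n) ^ a) = (P.map φ.toRingHom).eval (φ z) := by
          rw [hP, Polynomial.map_map, hφcomp, hφz, hqdef]
      _ = φ (P.eval z) := by
          rw [Polynomial.eval_map]
          exact Polynomial.eval₂_at_apply φ.toRingHom z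
      _ = 0 := by rw [hPz, map_zero]
  -- multiset argument
  set m : Multiset ℂ := (Grone n r).val.map (fun a => (zeta n) ^ a) with hm
  have hnodup : m.Nodup := by
    refine Multiset.Nodup.map_on ?_ (Grone n r).nodup
    intro a ha b hb hab
    have ha' : a < n := by
      have := Finset.mem_val.mp ha; rw [Grone, Finset.mem_filter, Finset.mem_range] at this
      exact this.1
    have hb' : b < n := by
      have := Finset.mem_val.mp hb; rw [Grone, Finset.mem_filter, Finset.mem_range] at this
      exact this.1
    exact (zeta_prim hn).pow_inj ha' hb' hab
  have hle : m ≤ q.roots := by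
    refine (Multiset.le_iff_subset hnodup).mpr ?_
    intro x hx
    obtain ⟨a, ha, rfl⟩ := Multiset.mem_map.mp hx
    rw [Polynomial.mem_roots hqne]
    exact hroot a (Finset.mem_val.mp ha)
  have hphir : Phir n r = (m.map (fun x => X - C x)).prod := by
    rw [Phir, hm, Multiset.map_map, Finset.prod_eq_multiset_prod]
    congr 1
    apply Multiset.map_congr rfl
    intro a _
    simp only [Function.comp_apply, exp_eq_zeta_pow]
  rw [hphir]
  exact dvd_trans (Multiset.prod_dvd_prod_of_le (Multiset.map_le_map hle))
    (prod_multiset_X_sub_C_dvd q)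

end aux

theorem stmt13 (n : ℕ) (hn : 0 < n) (h4 : n % 4 = 0) :
    (∃ p : Polynomial QI, p.map (algebraMap QI ℂ) = Phir n 1 ∧ Irreducible p) ∧
    (∃ p : Polynomial QI, p.map (algebraMap QI ℂ) = Phir n 3 ∧ Irreducible p) := by
  have hn4 : 4 ≤ n := by omega
  have hg3 : Nat.gcd (n - 1) n = 1 := by
    have hm : n % (n - 1) = 1 := by
      rw [Nat.mod_eq_sub_mod (by omega), show n - (n - 1) = 1 by omega,
        Nat.one_mod_eq_one.mpr (by omega)]
    rw [Nat.gcd_rec, hm, Nat.gcd_one_left]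
  have hc1 : (1 : ℕ) ∈ Grone n 1 := by
    rw [Grone, Finset.mem_filter, Finset.mem_range]
    exact ⟨by omega, le_refl _, Nat.gcd_one_left n, rfl⟩
  have hc3 : n - 1 ∈ Grone n 3 := by
    rw [Grone, Finset.mem_filter, Finset.mem_range]
    exact ⟨by omega, by omega, hg3, by omega⟩
  have hInt1 : IsIntegral QI (zeta n ^ 1) :=
    (((zeta_prim hn).pow_of_coprime 1 (Nat.gcd_one_left n)).isIntegral hn).tower_top
  have hInt3 : IsIntegral QI (zeta n ^ (n - 1)) :=
    (((zeta_prim hn).pow_of_coprime (n - 1) hg3).isIntegral hn).tower_top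
  have hdvd1 := phir_dvd hn4 h4 1 1 hc1
  have hdvd3 := phir_dvd hn4 h4 3 (n - 1) hc3
  have hq1m : ((minpoly QI (zeta n ^ 1)).map (algebraMap QI ℂ)).Monic :=
    (minpoly.monic hInt1).map _
  have hq3m : ((minpoly QI (zeta n ^ (n - 1))).map (algebraMap QI ℂ)).Monic :=
    (minpoly.monic hInt3).map _
  have hdq1 : ((minpoly QI (zeta n ^ 1)).map (algebraMap QI ℂ)).natDegree
      = (minpoly QI (zeta n ^ 1)).natDegree := (minpoly.monic hInt1).natDegree_map _
  have hdq3 : ((minpoly QI (zeta n ^ (n - 1))).map (algebraMap QI ℂ)).natDegree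
      = (minpoly QI (zeta n ^ (n - 1))).natDegree := (minpoly.monic hInt3).natDegree_map _
  have hP1m : (Phir n 1).Monic :=
    monic_prod_of_monic _ _ (fun a _ => monic_X_sub_C _)
  have hP3m : (Phir n 3).Monic :=
    monic_prod_of_monic _ _ (fun a _ => monic_X_sub_C _)
  have hdP1 : (Phir n 1).natDegree = (Grone n 1).card := by
    rw [Phir, Polynomial.natDegree_prod _ _ (fun a _ => X_sub_C_ne_zero _)]
    simp [Polynomial.natDegree_X_sub_C]
  have hdP3 : (Phir n 3).natDegree = (Grone n 3).card := by
    rw [Phir, Polynomial.natDegree_prod _ _ (fun a _ => X_sub_C_ne_zero _)]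
    simp [Polynomial.natDegree_X_sub_C]
  have hle1 : (Grone n 1).card ≤ (minpoly QI (zeta n ^ 1)).natDegree := by
    have := Polynomial.natDegree_le_of_dvd hdvd1 hq1m.ne_zero
    rwa [hdP1, hdq1] at this
  have hle3 : (Grone n 3).card ≤ (minpoly QI (zeta n ^ (n - 1))).natDegree := by
    have := Polynomial.natDegree_le_of_dvd hdvd3 hq3m.ne_zero
    rwa [hdP3, hdq3] at this
  have hdeg1 := minpoly_deg hn4 h4 1 (Nat.gcd_one_left n)
  have hdeg3 := minpoly_deg hn4 h4 (n - 1) hg3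
  have hcard := grone_card_add hn4 h4
  have he1 : (minpoly QI (zeta n ^ 1)).natDegree = (Grone n 1).card := by omega
  have he3 : (minpoly QI (zeta n ^ (n - 1))).natDegree = (Grone n 3).card := by omega
  refine ⟨⟨minpoly QI (zeta n ^ 1), ?_, minpoly.irreducible hInt1⟩,
    ⟨minpoly QI (zeta n ^ (n - 1)), ?_, minpoly.irreducible hInt3⟩⟩
  · exact Polynomial.eq_of_monic_of_dvd_of_natDegree_le hP1m hq1m hdvd1 (by omega)
  · exact Polynomial.eq_of_monic_of_dvd_of_natDegree_le hP3m hq3m hdvd3 (by omega)
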